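/- Let 0 < α < 1/4, C_{α,N} = (∑_{|n| ≤ N} 2⟨n⟩^{-4α})^{-1/4}, and fix n ∈ ℤ. Then the limit c_α := lim_{N→∞} C_{α,N}⁴ ∑_{n₁ + n₂ = n, |n₁|,|n₂| ≤ N} 2⟨n₁⟩^{-2α}⟨n₂⟩^{-2α} exists and equals 1, independently of n. -/

import Mathlib

open Filter

/-- The Japanese bracket `⟨n⟩ = √(1 + n²)`. -/
noncomputable def jbr (n : ℤ) : ℝ := Real.sqrt (1 + (n : ℝ) ^ 2)

/-- The renormalization constant `C_{α,N} = (∑_{|n| ≤ N} 2 ⟨n⟩^{-4α})^{-1/4}`. -/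
noncomputable def renC (α : ℝ) (N : ℕ) : ℝ :=
  (∑ n ∈ Finset.Icc (-(N : ℤ)) (N : ℤ), 2 / jbr n ^ (4 * α)) ^ (-(1 / 4 : ℝ))

/-- The set of pairs `(n₁, n₂)` with `|n₁|, |n₂| ≤ N` and `n₁ + n₂ = n`. -/
noncomputable def pairSet (N : ℕ) (n : ℤ) : Finset (ℤ × ℤ) :=
  ((Finset.Icc (-(N : ℤ)) (N : ℤ)) ×ˢ (Finset.Icc (-(N : ℤ)) (N : ℤ))).filter
    (fun p => p.1 + p.2 = n)


lemma ratio_tendsto (n : ℤ) :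
    Tendsto (fun k : ℤ => ((1 + (k:ℝ)^2) / (1 + ((n:ℝ) - k)^2))) cofinite (nhds 1) := by
  set G : ℝ → ℝ := fun t => (t^2 + 1)/(t^2 + ((n:ℝ)*t - 1)^2) with hGdef
  have hG : Tendsto G (nhds 0) (nhds 1) := by
    have hc : ContinuousAt G 0 := by
      apply ContinuousAt.div (by fun_prop) (by fun_prop)
      norm_num
    have h0 : G 0 = 1 := by simp [hGdef]
    simpa [h0] using hc.tendsto
  have hinvR : Tendsto (fun x : ℝ => x⁻¹) atBot (nhds 0) := by
    have h := (tendsto_inv_atTop_zero (𝕜 := ℝ)).comp tendsto_neg_atBot_atTop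
    have h2 := h.neg
    simpa [Function.comp, inv_neg] using h2
  have hinv : Tendsto (fun k : ℤ => ((k:ℝ))⁻¹) cofinite (nhds 0) := by
    rw [Int.cofinite_eq]
    refine Tendsto.sup ?_ ?_
    · exact hinvR.comp (tendsto_intCast_atBot_iff.2 tendsto_id)
    · exact tendsto_inv_atTop_zero.comp tendsto_intCast_atTop_atTop
  have hev : ∀ᶠ k : ℤ in cofinite, G ((k:ℝ))⁻¹ = (1 + (k:ℝ)^2) / (1 + ((n:ℝ) - k)^2) := by
    filter_upwards [(Set.finite_singleton (0:ℤ)).eventually_cofinite_notMem] with k hk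
    have hk' : (k:ℝ) ≠ 0 := Int.cast_ne_zero.2 (by simpa using hk)
    simp only [hGdef]
    field_simp
  exact (hG.comp hinv).congr' hev

lemma jbr_pos (k : ℤ) : 0 < jbr k := Real.sqrt_pos.2 (by positivity)

lemma one_le_jbr (k : ℤ) : 1 ≤ jbr k := by
  have := Real.sqrt_le_sqrt (show (1:ℝ) ≤ 1 + (k:ℝ)^2 by nlinarith [sq_nonneg ((k:ℝ))])
  simpa [jbr] using this

lemma jbr_rpow (k : ℤ) (β : ℝ) : jbr k ^ (2 * β) = (1 + (k:ℝ)^2) ^ β := by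
  have h : (0:ℝ) ≤ 1 + (k:ℝ)^2 := by positivity
  rw [jbr, Real.sqrt_eq_rpow, ← Real.rpow_mul h]
  congr 1
  ring

lemma rpow_le_one_jbr (k : ℤ) {c : ℝ} (hc : c ≤ 0) : jbr k ^ c ≤ 1 :=
  Real.rpow_le_one_of_one_le_of_nonpos (one_le_jbr k) hc

lemma key_identity (α : ℝ) (n k : ℤ) :
    2 * jbr k ^ (-(2 * α)) * jbr (n - k) ^ (-(2 * α)) =
      (2 / jbr k ^ (4 * α)) * ((1 + (k:ℝ)^2) / (1 + ((n:ℝ) - k)^2)) ^ α := by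
  have ha : (0:ℝ) < 1 + (k:ℝ)^2 := by positivity
  have hb : (0:ℝ) < 1 + ((n:ℝ) - k)^2 := by positivity
  have h1 : jbr k ^ (-(2 * α)) = ((1 + (k:ℝ)^2) ^ α)⁻¹ := by
    rw [show -(2*α) = 2 * (-α) by ring, jbr_rpow, Real.rpow_neg ha.le]
  have h2 : jbr (n - k) ^ (-(2 * α)) = ((1 + ((n:ℝ) - k)^2) ^ α)⁻¹ := by
    rw [show -(2*α) = 2 * (-α) by ring, jbr_rpow, Real.rpow_neg (by positivity)]
    push_cast
    ring_nf
  have h3 : jbr k ^ (4 * α) = (1 + (k:ℝ)^2) ^ α * (1 + (k:ℝ)^2) ^ α := by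
    rw [show (4:ℝ) * α = 2 * (2*α) by ring, jbr_rpow, ← Real.rpow_add ha]
    ring_nf
  rw [h1, h2, h3, Real.div_rpow ha.le hb.le]
  have hpa : (0:ℝ) < (1 + (k:ℝ)^2) ^ α := Real.rpow_pos_of_pos ha α
  have hpb : (0:ℝ) < (1 + ((n:ℝ) - k)^2) ^ α := Real.rpow_pos_of_pos hb α
  field_simp

lemma f_nonneg (α : ℝ) (k : ℤ) : 0 ≤ 2 / jbr k ^ (4 * α) := by
  have := Real.rpow_pos_of_pos (jbr_pos k) (4 * α)
  positivity

lemma S_tendsto (α : ℝ) (hα₁ : 0 < α) (hα₂ : α < 1/4) :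
    Tendsto (fun N : ℕ => ∑ k ∈ Finset.Icc (-(N : ℤ)) (N : ℤ), 2 / jbr k ^ (4 * α))
      atTop atTop := by
  have hmono : ∀ N : ℕ, (∑ i ∈ Finset.range N, (1 / ((i:ℝ) + 1))) ≤
      ∑ k ∈ Finset.Icc (-(N : ℤ)) (N : ℤ), 2 / jbr k ^ (4 * α) := by
    intro N
    have emb : Function.Injective (fun i : ℕ => (i : ℤ)) := fun a b h => by simpa using h
    have h1 : (∑ i ∈ Finset.range N, (1 / ((i:ℝ) + 1))) ≤
        ∑ i ∈ Finset.range N, 2 / jbr (i : ℤ) ^ (4 * α) := by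
      apply Finset.sum_le_sum
      intro i _
      have hj1 : 1 ≤ jbr (i:ℤ) := one_le_jbr _
      have hle : jbr (i:ℤ) ^ (4 * α) ≤ (i:ℝ) + 1 := by
        have h4 : (4:ℝ) * α ≤ 1 := by linarith
        have := Real.rpow_le_rpow_of_exponent_le hj1 h4
        rw [Real.rpow_one] at this
        refine this.trans ?_
        rw [jbr]
        have : Real.sqrt (1 + ((i:ℤ):ℝ)^2) ≤ Real.sqrt (((i:ℝ)+1)^2) := by
          apply Real.sqrt_le_sqrt; push_cast; nlinarith [Nat.cast_nonneg (α := ℝ) i]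
        simpa [Real.sqrt_sq (by positivity : (0:ℝ) ≤ (i:ℝ)+1)] using this
      have hpos : (0:ℝ) < jbr (i:ℤ) ^ (4 * α) := Real.rpow_pos_of_pos (jbr_pos _) _
      rw [div_le_div_iff₀ (by positivity) hpos]
      nlinarith
    refine h1.trans ?_
    rw [show (∑ i ∈ Finset.range N, 2 / jbr (i : ℤ) ^ (4 * α)) =
        ∑ k ∈ (Finset.range N).map ⟨fun i : ℕ => (i : ℤ), emb⟩, 2 / jbr k ^ (4 * α) by
      rw [Finset.sum_map]; rfl]
    apply Finset.sum_le_sum_of_subset_of_nonneg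
    · intro k hk
      simp only [Finset.mem_map, Finset.mem_range, Function.Embedding.coeFn_mk] at hk
      obtain ⟨i, hi, rfl⟩ := hk
      simp only [Finset.mem_Icc]
      omega
    · intro k _ _; exact f_nonneg α k
  exact tendsto_atTop_mono hmono Real.tendsto_sum_range_one_div_nat_succ_atTop

/-- For `0 < α < 1/4` and fixed `n ∈ ℤ`, the limit
`c_α = lim_N C_{α,N}⁴ ∑_{n₁+n₂=n, |n₁|,|n₂|≤N} 2⟨n₁⟩^{-2α}⟨n₂⟩^{-2α}` exists and
equals `1`, independently of `n`. -/
theorem renC_limit_constant_eq_one (α : ℝ) (hα₁ : 0 < α) (hα₂ : α < 1 / 4) (n : ℤ) :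
    Tendsto (fun N : ℕ =>
      renC α N ^ 4 * ∑ p ∈ pairSet N n, 2 * jbr p.1 ^ (-(2 * α)) * jbr p.2 ^ (-(2 * α)))
      atTop (nhds 1) := by
  set f : ℤ → ℝ := fun k => 2 / jbr k ^ (4 * α) with hfdef
  set g : ℤ → ℝ := fun k => 2 * jbr k ^ (-(2 * α)) * jbr (n - k) ^ (-(2 * α)) with hgdef
  set h' : ℤ → ℝ := fun k => ((1 + (k:ℝ)^2) / (1 + ((n:ℝ) - k)^2)) ^ α with hhdef
  set S : ℕ → ℝ := fun N => ∑ k ∈ Finset.Icc (-(N : ℤ)) (N : ℤ), f k with hSdef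
  have hgf : ∀ k, g k = f k * h' k := fun k => key_identity α n k
  have hf0 : ∀ k, 0 ≤ f k := fun k => f_nonneg α k
  have hjle1 : ∀ k : ℤ, jbr k ^ (-(2 * α)) ≤ 1 := fun k =>
    Real.rpow_le_one_of_one_le_of_nonpos (one_le_jbr k) (by linarith)
  have hjpow0 : ∀ k : ℤ, (0:ℝ) ≤ jbr k ^ (-(2 * α)) := fun k =>
    (Real.rpow_pos_of_pos (jbr_pos k) _).le
  have hg0 : ∀ k, 0 ≤ g k := by
    intro k; simp only [hgdef]
    have := hjpow0 k; have := hjpow0 (n - k); positivity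
  have hg2 : ∀ k, g k ≤ 2 := by
    intro k
    have h1 := hjle1 k; have h2 := hjle1 (n - k)
    have h3 := hjpow0 k; have h4 := hjpow0 (n - k)
    simp only [hgdef]; nlinarith
  have hSpos : ∀ N, 0 < S N := by
    intro N
    apply Finset.sum_pos' (fun k _ => hf0 k)
    refine ⟨0, by simp [Finset.mem_Icc], ?_⟩
    have := Real.rpow_pos_of_pos (jbr_pos 0) (4 * α)
    simp only [hfdef]; positivity
  have hrenC : ∀ N, renC α N ^ 4 = (S N)⁻¹ := by
    intro N
    rw [renC, ← Real.rpow_natCast (_ ^ (-(1/4:ℝ))) 4, ← Real.rpow_mul (hSpos N).le]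
    norm_num [Real.rpow_neg_one]
  -- reindex the pair sum
  have hTsum : ∀ N : ℕ,
      (∑ p ∈ pairSet N n, 2 * jbr p.1 ^ (-(2 * α)) * jbr p.2 ^ (-(2 * α))) =
      ∑ k ∈ (Finset.Icc (-(N : ℤ)) (N : ℤ)).filter
        (fun k => n - k ∈ Finset.Icc (-(N : ℤ)) (N : ℤ)), g k := by
    intro N
    refine Finset.sum_nbij' (fun p => p.1) (fun k => (k, n - k)) ?_ ?_ ?_ ?_ ?_
    · intro p hp
      simp only [pairSet, Finset.mem_filter, Finset.mem_product] at hp ⊢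
      refine ⟨hp.1.1, ?_⟩
      have : p.2 = n - p.1 := by omega
      rw [← this]; exact hp.1.2
    · intro k hk
      simp only [pairSet, Finset.mem_filter, Finset.mem_product] at hk ⊢
      exact ⟨⟨hk.1, hk.2⟩, by ring⟩
    · intro p hp
      simp only [pairSet, Finset.mem_filter] at hp
      have : p.2 = n - p.1 := by omega
      exact Prod.ext rfl this.symm
    · intro k _; rfl
    · intro p hp
      simp only [pairSet, Finset.mem_filter] at hp
      have h2 : p.2 = n - p.1 := by omega
      simp only [hgdef, h2]
  -- the tendsto of h'
  have h't : Tendsto h' cofinite (nhds 1) := by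
    have hc : ContinuousAt (fun x : ℝ => x ^ α) 1 :=
      Real.continuousAt_rpow_const 1 α (Or.inl one_ne_zero)
    have := hc.tendsto.comp (ratio_tendsto n)
    simpa [hhdef, Function.comp_def, Real.one_rpow] using this
  rw [Metric.tendsto_atTop]
  intro ε hε
  -- get M from h't
  have hev : ∀ᶠ k in cofinite, |h' k - 1| ≤ ε / 3 := by
    have := Metric.tendsto_nhds.mp h't (ε / 3) (by linarith)
    filter_upwards [this] with k hk
    rw [Real.dist_eq] at hk; linarith
  have hsfin : {k : ℤ | ¬ |h' k - 1| ≤ ε / 3}.Finite := Filter.eventually_cofinite.mp hev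
  set M : ℕ := hsfin.toFinset.sup Int.natAbs + 1 with hMdef
  have hMkey : ∀ k : ℤ, M ≤ k.natAbs → |h' k - 1| ≤ ε / 3 := by
    intro k hk
    by_contra hc
    have : k ∈ hsfin.toFinset := by simpa using hc
    have := Finset.le_sup (f := Int.natAbs) this
    omega
  set B : ℝ := ∑ k ∈ Finset.Icc (-(M : ℤ)) (M : ℤ), |g k - f k| with hBdef
  have hB0 : 0 ≤ B := Finset.sum_nonneg fun k _ => abs_nonneg _
  -- choose N₀
  obtain ⟨N₀, hN₀⟩ := Filter.eventually_atTop.mp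
    ((S_tendsto α hα₁ hα₂).eventually_ge_atTop
      (max 1 (3 * (2 * (n.natAbs : ℝ) + B) / ε)))
  refine ⟨N₀, fun N hN => ?_⟩
  have hSN : max 1 (3 * (2 * (n.natAbs : ℝ) + B) / ε) ≤ S N := hN₀ N hN
  have hS1 : (1:ℝ) ≤ S N := le_trans (le_max_left _ _) hSN
  have hS2 : 3 * (2 * (n.natAbs : ℝ) + B) ≤ ε * S N := by
    have := le_trans (le_max_right _ _) hSN
    rw [div_le_iff₀ hε] at this
    nlinarith
  set A : Finset ℤ := (Finset.Icc (-(N : ℤ)) (N : ℤ)).filter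
    (fun k => n - k ∈ Finset.Icc (-(N : ℤ)) (N : ℤ)) with hAdef
  have hAsub : A ⊆ Finset.Icc (-(N : ℤ)) (N : ℤ) := Finset.filter_subset _ _
  set T : ℝ := ∑ k ∈ A, g k with hTdef
  -- boundary bound
  have hbdry : ∑ k ∈ Finset.Icc (-(N : ℤ)) (N : ℤ) \ A, g k ≤ 2 * (n.natAbs : ℝ) := by
    have hcard : (Finset.Icc (-(N : ℤ)) (N : ℤ) \ A).card ≤ n.natAbs := by
      have hsub : Finset.Icc (-(N : ℤ)) (N : ℤ) \ A ⊆
          Finset.Ico (-(N : ℤ)) (n - N) ∪ Finset.Ioc (n + N) (N : ℤ) := by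
        intro k hk
        simp only [Finset.mem_sdiff, hAdef, Finset.mem_filter, Finset.mem_Icc] at hk
        simp only [Finset.mem_union, Finset.mem_Ico, Finset.mem_Ioc]
        omega
      have := Finset.card_le_card hsub
      have hcu := Finset.card_union_le (Finset.Ico (-(N : ℤ)) (n - N))
        (Finset.Ioc (n + N) (N : ℤ))
      rw [Int.card_Ico, Int.card_Ioc] at hcu
      omega
    calc ∑ k ∈ Finset.Icc (-(N : ℤ)) (N : ℤ) \ A, g k
        ≤ (Finset.Icc (-(N : ℤ)) (N : ℤ) \ A).card • (2:ℝ) :=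
          Finset.sum_le_card_nsmul _ _ 2 (fun k _ => hg2 k)
      _ = ((Finset.Icc (-(N : ℤ)) (N : ℤ) \ A).card : ℝ) * 2 := by
          rw [nsmul_eq_mul]
      _ ≤ (n.natAbs : ℝ) * 2 := by
          have : ((Finset.Icc (-(N : ℤ)) (N : ℤ) \ A).card : ℝ) ≤ (n.natAbs : ℝ) := by
            exact_mod_cast hcard
          linarith
      _ = 2 * (n.natAbs : ℝ) := by ring
  -- difference of sums
  have hTS : |T - S N| ≤ 2 * (n.natAbs : ℝ) +
      ∑ k ∈ Finset.Icc (-(N : ℤ)) (N : ℤ), |g k - f k| := by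
    have hsplit : ∑ k ∈ Finset.Icc (-(N : ℤ)) (N : ℤ), g k =
        T + ∑ k ∈ Finset.Icc (-(N : ℤ)) (N : ℤ) \ A, g k := by
      rw [hTdef, ← Finset.sum_sdiff hAsub]; ring
    have habs : |∑ k ∈ Finset.Icc (-(N : ℤ)) (N : ℤ), (g k - f k)| ≤
        ∑ k ∈ Finset.Icc (-(N : ℤ)) (N : ℤ), |g k - f k| :=
      Finset.abs_sum_le_sum_abs _ _
    have hEq : T - S N = (∑ k ∈ Finset.Icc (-(N : ℤ)) (N : ℤ), (g k - f k))
        - ∑ k ∈ Finset.Icc (-(N : ℤ)) (N : ℤ) \ A, g k := by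
      rw [Finset.sum_sub_distrib, hSdef]
      simp only
      linarith [hsplit]
    rw [hEq]
    have hbd0 : 0 ≤ ∑ k ∈ Finset.Icc (-(N : ℤ)) (N : ℤ) \ A, g k :=
      Finset.sum_nonneg fun k _ => hg0 k
    calc |_ - _| ≤ |∑ k ∈ Finset.Icc (-(N : ℤ)) (N : ℤ), (g k - f k)| +
          |∑ k ∈ Finset.Icc (-(N : ℤ)) (N : ℤ) \ A, g k| := abs_sub _ _
      _ ≤ ∑ k ∈ Finset.Icc (-(N : ℤ)) (N : ℤ), |g k - f k| + 2 * (n.natAbs : ℝ) := by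
          rw [abs_of_nonneg hbd0]; linarith
      _ = _ := by ring
  -- split the abs sum
  have hsumabs : ∑ k ∈ Finset.Icc (-(N : ℤ)) (N : ℤ), |g k - f k| ≤ B + ε / 3 * S N := by
    rw [← Finset.sum_filter_add_sum_filter_not (Finset.Icc (-(N : ℤ)) (N : ℤ))
      (fun k => k.natAbs < M)]
    have h1 : ∑ k ∈ (Finset.Icc (-(N : ℤ)) (N : ℤ)).filter (fun k => k.natAbs < M),
        |g k - f k| ≤ B := by
      apply Finset.sum_le_sum_of_subset_of_nonneg
      · intro k hk
        simp only [Finset.mem_filter, Finset.mem_Icc] at hk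
        simp only [Finset.mem_Icc]
        omega
      · intro k _ _; exact abs_nonneg _
    have h2 : ∑ k ∈ (Finset.Icc (-(N : ℤ)) (N : ℤ)).filter (fun k => ¬ k.natAbs < M),
        |g k - f k| ≤ ε / 3 * S N := by
      calc ∑ k ∈ (Finset.Icc (-(N : ℤ)) (N : ℤ)).filter (fun k => ¬ k.natAbs < M),
          |g k - f k|
          ≤ ∑ k ∈ (Finset.Icc (-(N : ℤ)) (N : ℤ)).filter (fun k => ¬ k.natAbs < M),
            ε / 3 * f k := by
            apply Finset.sum_le_sum
            intro k hk
            simp only [Finset.mem_filter, not_lt] at hk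
            have hk' := hMkey k hk.2
            have : |g k - f k| = f k * |h' k - 1| := by
              rw [hgf k, show f k * h' k - f k = f k * (h' k - 1) by ring, abs_mul,
                abs_of_nonneg (hf0 k)]
            rw [this]
            calc f k * |h' k - 1| ≤ f k * (ε / 3) :=
                  mul_le_mul_of_nonneg_left hk' (hf0 k)
              _ = ε / 3 * f k := by ring
        _ = ε / 3 * ∑ k ∈ (Finset.Icc (-(N : ℤ)) (N : ℤ)).filter (fun k => ¬ k.natAbs < M),
              f k := by rw [Finset.mul_sum]
        _ ≤ ε / 3 * S N := by
            apply mul_le_mul_of_nonneg_left _ (by linarith)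
            apply Finset.sum_le_sum_of_subset_of_nonneg (Finset.filter_subset _ _)
            intro k _ _; exact hf0 k
    linarith
  -- final distance estimate
  have hfinal : |T - S N| ≤ 2 * (n.natAbs : ℝ) + B + ε / 3 * S N := by linarith
  have hSNpos := hSpos N
  rw [hrenC N, hTsum N]
  rw [Real.dist_eq]
  have hEq2 : (S N)⁻¹ * T - 1 = (T - S N) / S N := by
    field_simp
  rw [← hAdef, ← hTdef, hEq2, abs_div, abs_of_pos hSNpos, div_lt_iff₀ hSNpos]
  nlinarith [abs_nonneg (T - S N)]
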